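/- The Lyapunov function W(x,y) = V(I(x,y)) of the Bernoulli-lemniscate system is proper: W(x,y) → +∞ as ‖(x,y)‖ → ∞, i.e. for every R > 0 there exists r > 0 such that W(x,y) ≥ R whenever x² + y² ≥ r². -/

import Mathlib

/-- `I(x,y) = (x²+y²)² − 4(x²−y²)`. -/
noncomputable def lemI (x y : ℝ) : ℝ := (x ^ 2 + y ^ 2) ^ 2 - 4 * (x ^ 2 - y ^ 2)

/-- `V(s) = s²/(2(1+s²)^{3/4})`. -/
noncomputable def lemV (s : ℝ) : ℝ := s ^ 2 / (2 * (1 + s ^ 2) ^ ((3 : ℝ) / 4))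

/-- The Lyapunov function `W(x,y) = V(I(x,y))`. -/
noncomputable def lemW (x y : ℝ) : ℝ := lemV (lemI x y)

lemma lemV_lower {s : ℝ} (hs : 1 ≤ s) : Real.sqrt s / 4 ≤ lemV s := by
  have hs0 : (0:ℝ) < s := by linarith
  set t := Real.sqrt s with ht
  have ht0 : 0 < t := Real.sqrt_pos.mpr hs0
  have ht2 : t ^ 2 = s := Real.sq_sqrt hs0.le
  have hD0 : (0:ℝ) < (1 + s ^ 2) ^ ((3 : ℝ) / 4) := by positivity
  -- key bound: (1+s²)^{3/4} ≤ 2 t³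
  have hkey : (1 + s ^ 2) ^ ((3 : ℝ) / 4) ≤ 2 * t ^ 3 := by
    have hpow : ((1 + s ^ 2) ^ ((3 : ℝ) / 4)) ^ (4:ℕ) = (1 + s ^ 2) ^ (3:ℕ) := by
      rw [← Real.rpow_natCast ((1 + s ^ 2) ^ ((3 : ℝ) / 4)) 4,
        ← Real.rpow_mul (by positivity), ← Real.rpow_natCast (1 + s ^ 2) 3]
      norm_num
    refine le_of_pow_le_pow_left₀ (n := 4) (by norm_num) (by positivity) ?_
    rw [hpow]
    have h2 : (2 * t ^ 3) ^ (4:ℕ) = 16 * s ^ 6 := by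
      have : t ^ 12 = s ^ 6 := by
        calc t ^ 12 = (t ^ 2) ^ 6 := by ring
        _ = s ^ 6 := by rw [ht2]
      nlinarith [this]
    rw [h2]
    have hle : 1 + s ^ 2 ≤ 2 * s ^ 2 := by nlinarith
    calc (1 + s ^ 2) ^ 3 ≤ (2 * s ^ 2) ^ 3 := by
          exact pow_le_pow_left₀ (by positivity) hle 3
      _ = 8 * s ^ 6 := by ring
      _ ≤ 16 * s ^ 6 := by nlinarith [pow_pos hs0 6]
  have h4 : t / 4 = t ^ 4 / (4 * t ^ 3) := by
    field_simp
  have ht4 : t ^ 4 = s ^ 2 := by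
    calc t ^ 4 = (t ^ 2) ^ 2 := by ring
    _ = s ^ 2 := by rw [ht2]
  rw [lemV, h4, ht4]
  apply div_le_div_of_nonneg_left (by positivity) (by positivity)
  nlinarith [hkey]

/-- The Lyapunov function `W = V ∘ I` of the Bernoulli-lemniscate system is proper:
`W(x,y) → +∞` as `‖(x,y)‖ → ∞`, i.e. for every `R > 0` there is `r > 0` with
`W(x,y) ≥ R` whenever `x² + y² ≥ r²`. -/
theorem lemniscate_lyapunov_proper :
    ∀ R : ℝ, 0 < R → ∃ r : ℝ, 0 < r ∧ ∀ x y : ℝ, r ^ 2 ≤ x ^ 2 + y ^ 2 → R ≤ lemW x y := by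
  intro R hR
  set s₀ : ℝ := (4 * R) ^ 2 + 1 with hs₀
  have hs₀1 : 1 ≤ s₀ := by nlinarith
  refine ⟨Real.sqrt (s₀ + 4), Real.sqrt_pos.mpr (by linarith), ?_⟩
  intro x y hxy
  have hr2 : Real.sqrt (s₀ + 4) ^ 2 = s₀ + 4 := Real.sq_sqrt (by linarith)
  rw [hr2] at hxy
  have hI : s₀ ≤ lemI x y := by
    rw [lemI]
    nlinarith [sq_nonneg y, sq_nonneg (x ^ 2 + y ^ 2 - 4), sq_nonneg (x^2 + y^2)]
  have hI1 : 1 ≤ lemI x y := le_trans hs₀1 hI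
  have h1 : Real.sqrt (lemI x y) / 4 ≤ lemW x y := lemV_lower hI1
  have h2 : 4 * R ≤ Real.sqrt (lemI x y) := by
    have : Real.sqrt ((4*R)^2) ≤ Real.sqrt (lemI x y) := by
      apply Real.sqrt_le_sqrt; nlinarith
    rwa [Real.sqrt_sq (by positivity)] at this
  linarith
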